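/- (Krichevsky–Trofimov regret bound, binary-alphabet instance) Let y_1,…,y_T ∈ {0,1} and let the sequential probability assignment be Q_{t−1}(y) = (N_{t−1}(y) + 1/2)/((t−1) + 1), where N_{t−1}(y) = #{s < t : y_s = y}. Then −∑_{t=1}^T log Q_{t−1}(y_t) − min_{q∈[0,1]} (−∑_{t=1}^T log q^{1{y_t=1}}(1−q)^{1{y_t=0}}) ≤ (1/2)·log T + C for some absolute constant C and all T ≥ 1. -/

import Mathlib

open Finset Real

private noncomputable def ktA (m : ℕ) : ℝ := ∑ i ∈ Finset.range m, Real.log ((i : ℝ) + 1/2)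

private lemma kt_telescope (y : ℕ → Bool) (T : ℕ) :
    ∑ t ∈ Finset.Icc 1 T,
        Real.log ((((Finset.Icc 1 (t - 1)).filter (fun s => y s = y t)).card : ℝ) + 1/2)
      = ktA (((Finset.Icc 1 T).filter (fun s => y s = true)).card)
        + ktA (((Finset.Icc 1 T).filter (fun s => y s = false)).card) := by
  induction T with
  | zero => simp [ktA]
  | succ T ih =>
    have hins : Finset.Icc 1 (T + 1) = insert (T + 1) (Finset.Icc 1 T) := by
      ext x
      simp only [Finset.mem_Icc, Finset.mem_insert]
      omega
    rw [Finset.sum_Icc_succ_top (by omega), ih, Nat.add_sub_cancel]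
    rw [hins]
    have hnm : (T+1) ∉ Finset.Icc 1 T := by simp
    cases hy : y (T + 1) with
    | true =>
      rw [Finset.filter_insert, Finset.filter_insert]
      simp only [hy, if_pos trivial]
      rw [if_neg (by simp)]
      rw [Finset.card_insert_of_notMem (fun h => hnm (Finset.mem_filter.1 h).1)]
      rw [show ∀ n, ktA (n+1) = ktA n + Real.log ((n:ℝ)+1/2) from
        fun n => Finset.sum_range_succ _ n]
      ring
    | false =>
      rw [Finset.filter_insert, Finset.filter_insert]
      simp only [hy, if_pos trivial]
      rw [if_neg (by simp)]
      rw [Finset.card_insert_of_notMem (fun h => hnm (Finset.mem_filter.1 h).1)]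
      rw [show ∀ n, ktA (n+1) = ktA n + Real.log ((n:ℝ)+1/2) from
        fun n => Finset.sum_range_succ _ n]
      ring

private lemma ktA_eq (m : ℕ) :
    ktA m = Real.log (Nat.factorial (2*m) : ℝ) - m * Real.log 4 - Real.log (Nat.factorial m : ℝ) := by
  induction m with
  | zero => simp [ktA]
  | succ m ih =>
    have h1 : (Nat.factorial (2*(m+1)) : ℝ) = (2*m+2) * ((2*m+1) * (Nat.factorial (2*m) : ℝ)) := by
      have : 2*(m+1) = (2*m+1) + 1 := by ring
      rw [this]
      push_cast [Nat.factorial_succ]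
      ring
    have h2 : (Nat.factorial (m+1) : ℝ) = (m+1) * (Nat.factorial m : ℝ) := by
      push_cast [Nat.factorial_succ]; ring
    have hf1 : (0:ℝ) < (Nat.factorial (2*m) : ℝ) := by positivity
    have hf2 : (0:ℝ) < (Nat.factorial m : ℝ) := by positivity
    have e1 : Real.log (Nat.factorial (2*(m+1)) : ℝ)
        = Real.log (2*(m:ℝ)+2) + Real.log (2*(m:ℝ)+1) + Real.log (Nat.factorial (2*m) : ℝ) := by
      rw [h1, Real.log_mul (by positivity) (by positivity),
        Real.log_mul (by positivity) (by positivity)]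
      ring
    have e2 : Real.log (Nat.factorial (m+1) : ℝ) = Real.log ((m:ℝ)+1) + Real.log (Nat.factorial m : ℝ) := by
      rw [h2, Real.log_mul (by positivity) (by positivity)]
    have e3 : Real.log (2*(m:ℝ)+2) = Real.log 2 + Real.log ((m:ℝ)+1) := by
      rw [← Real.log_mul (by norm_num) (by positivity)]; ring_nf
    have e4 : Real.log ((m:ℝ) + 1/2) = Real.log (2*(m:ℝ)+1) - Real.log 2 := by
      rw [← Real.log_div (by positivity) (by norm_num)]
      ring_nf
    have e5 : Real.log (4:ℝ) = 2 * Real.log 2 := by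
      rw [show (4:ℝ) = 2*2 by norm_num, Real.log_mul (by norm_num) (by norm_num)]; ring
    rw [ktA, Finset.sum_range_succ, ← ktA, ih]
    push_cast
    rw [e1, e2, e4]
    push_cast at e5 ⊢
    rw [e5] at *
    linarith [e3]

private lemma log_factorial_stirling (n : ℕ) (hn : 1 ≤ n) :
    Real.log (Nat.factorial n : ℝ) = Real.log (Stirling.stirlingSeq n)
      + (1/2 * Real.log 2 + 1/2 * Real.log n + n * Real.log n - n) := by
  have h := Stirling.log_stirlingSeq_formula n
  have hn0 : (0:ℝ) < (n:ℝ) := by exact_mod_cast hn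
  have e1 : Real.log (2 * (n:ℝ)) = Real.log 2 + Real.log n :=
    Real.log_mul (by norm_num) (by positivity)
  have e2 : Real.log ((n:ℝ) / Real.exp 1) = Real.log n - 1 := by
    rw [Real.log_div (by positivity) (Real.exp_ne_zero 1), Real.log_exp]
  rw [e1, e2] at h
  nlinarith [h]

private lemma stirling_log_bounds : ∃ c₁ c₂ : ℝ, ∀ n : ℕ, 1 ≤ n →
    c₁ ≤ Real.log (Stirling.stirlingSeq n) ∧ Real.log (Stirling.stirlingSeq n) ≤ c₂ := by
  obtain ⟨c, hc⟩ : ∃ c : ℝ, ∀ n : ℕ, c ≤ Real.log (Stirling.stirlingSeq (n + 1)) :=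
    ⟨_, Stirling.log_stirlingSeq_bounded_by_constant⟩
  refine ⟨c, Real.log (Stirling.stirlingSeq 1), fun n hn => ?_⟩
  obtain ⟨m, rfl⟩ := Nat.exists_eq_add_of_le hn
  constructor
  · simpa [add_comm] using hc m
  · have h := Stirling.log_stirlingSeq'_antitone (Nat.zero_le m)
    simpa [Function.comp, Nat.succ_eq_add_one, add_comm] using h

private lemma kt_main_ineq : ∃ C : ℝ, ∀ T k : ℕ, 1 ≤ T → k ≤ T →
    Real.log (Nat.factorial T : ℝ) - ktA k - ktA (T - k)
      ≤ (-(k:ℝ) * Real.log ((k:ℝ) / T) - ((T:ℝ) - k) * Real.log (((T:ℝ) - k) / T))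
        + 1/2 * Real.log T + C := by
  obtain ⟨c₁, c₂, hs⟩ := stirling_log_bounds
  refine ⟨3 * |c₂| + 2 * |c₁| + 1, fun T k hT hk => ?_⟩
  have hl2 : (0:ℝ) < Real.log 2 := Real.log_pos (by norm_num)
  have e4 : Real.log (4:ℝ) = 2 * Real.log 2 := by
    rw [show (4:ℝ) = 2*2 by norm_num, Real.log_mul (by norm_num) (by norm_num)]; ring
  have habs1 : c₂ ≤ |c₂| := le_abs_self c₂
  have habs2 : -|c₁| ≤ c₁ := neg_abs_le c₁
  have hktA0 : ktA 0 = 0 := by simp [ktA]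
  rcases Nat.eq_zero_or_pos k with hk0 | hk1
  · -- k = 0
    subst hk0
    have h2T : 1 ≤ 2*T := by omega
    have hfT := log_factorial_stirling T hT
    have hf2T := log_factorial_stirling (2*T) h2T
    have hsT := hs T hT
    have hs2T := hs (2*T) h2T
    have hT0 : (0:ℝ) < (T:ℝ) := by exact_mod_cast hT
    have e2T : Real.log ((2*T : ℕ) : ℝ) = Real.log 2 + Real.log T := by
      push_cast
      rw [← Real.log_mul (by norm_num) (by positivity)]
    rw [hktA0, Nat.sub_zero, ktA_eq, hfT, hf2T, e2T, e4]
    push_cast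
    have hd : ((T:ℝ) - 0) / (T:ℝ) = 1 := by
      rw [sub_zero]; exact div_self (ne_of_gt hT0)
    rw [hd, Real.log_one]
    set lT := Real.log (T:ℝ) with hlT
    linarith [hsT.1, hsT.2, hs2T.1, hs2T.2, hl2, habs1, habs2]
  rcases Nat.eq_or_lt_of_le hk with hkT | hkT
  · -- k = T
    subst hkT
    have h2T : 1 ≤ 2*k := by omega
    have hfT := log_factorial_stirling k hk1
    have hf2T := log_factorial_stirling (2*k) h2T
    have hsT := hs k hk1
    have hs2T := hs (2*k) h2T
    have hT0 : (0:ℝ) < (k:ℝ) := by exact_mod_cast hk1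
    have e2T : Real.log ((2*k : ℕ) : ℝ) = Real.log 2 + Real.log k := by
      push_cast
      rw [← Real.log_mul (by norm_num) (by positivity)]
    rw [Nat.sub_self, hktA0, ktA_eq, hfT, hf2T, e2T, e4]
    push_cast
    rw [div_self (ne_of_gt hT0), Real.log_one]
    set lT := Real.log (k:ℝ) with hlT
    linarith [hsT.1, hsT.2, hs2T.1, hs2T.2, hl2, habs1, habs2]
  · -- 1 ≤ k ≤ T - 1
    set j := T - k with hj
    have hj1 : 1 ≤ j := by omega
    have hkR : (0:ℝ) < (k:ℝ) := by exact_mod_cast hk1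
    have hjR : (0:ℝ) < (j:ℝ) := by exact_mod_cast hj1
    have hTR : (0:ℝ) < (T:ℝ) := by exact_mod_cast hT
    have hTcast : (T:ℝ) = (k:ℝ) + (j:ℝ) := by
      have : T = k + j := by omega
      rw [this]; push_cast; ring
    have hcast : ((T:ℝ) - k) = (j:ℝ) := by rw [hTcast]; ring
    have hfT := log_factorial_stirling T hT
    have hfk := log_factorial_stirling k hk1
    have hfj := log_factorial_stirling j hj1
    have hf2k := log_factorial_stirling (2*k) (by omega)
    have hf2j := log_factorial_stirling (2*j) (by omega)
    have hsT := hs T hT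
    have hsk := hs k hk1
    have hsj := hs j hj1
    have hs2k := hs (2*k) (by omega)
    have hs2j := hs (2*j) (by omega)
    have e2k : Real.log ((2*k : ℕ) : ℝ) = Real.log 2 + Real.log k := by
      push_cast; rw [← Real.log_mul (by norm_num) (by positivity)]
    have e2j : Real.log ((2*j : ℕ) : ℝ) = Real.log 2 + Real.log j := by
      push_cast; rw [← Real.log_mul (by norm_num) (by positivity)]
    have edk : Real.log ((k:ℝ) / T) = Real.log k - Real.log T :=
      Real.log_div (ne_of_gt hkR) (ne_of_gt hTR)
    have edj : Real.log ((j:ℝ) / T) = Real.log j - Real.log T :=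
      Real.log_div (ne_of_gt hjR) (ne_of_gt hTR)
    rw [ktA_eq, ktA_eq, hcast, hfT, hfk, hfj, hf2k, hf2j, edk, edj, e2k, e2j, e4]
    push_cast
    set lT := Real.log (T:ℝ) with hlT
    set lk := Real.log (k:ℝ) with hlk
    set lj := Real.log (j:ℝ) with hlj
    rw [hTcast]
    linarith [hsT.1, hsT.2, hsk.1, hsk.2, hsj.1, hsj.2, hs2k.1, hs2k.2, hs2j.1, hs2j.2,
      hl2, habs1, habs2]

private lemma gibbs_aux (m : ℕ) (t p : ℝ) (ht : 0 < t) (hp : 0 < p) :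
    (m:ℝ) * Real.log p - (m:ℝ) * Real.log ((m:ℝ)/t) ≤ p * t - m := by
  rcases Nat.eq_zero_or_pos m with h0 | h1
  · subst h0; simp; positivity
  · have hm : (0:ℝ) < (m:ℝ) := by exact_mod_cast h1
    have key : Real.log (p * t / m) ≤ p * t / m - 1 :=
      Real.log_le_sub_one_of_pos (by positivity)
    have e : Real.log p - Real.log ((m:ℝ)/t) = Real.log (p * t / m) := by
      rw [Real.log_div (by positivity) (ne_of_gt hm), Real.log_div (ne_of_gt hm) (ne_of_gt ht),
        Real.log_mul (ne_of_gt hp) (ne_of_gt ht)]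
      ring
    calc (m:ℝ) * Real.log p - (m:ℝ) * Real.log ((m:ℝ)/t)
        = (m:ℝ) * (Real.log p - Real.log ((m:ℝ)/t)) := by ring
      _ = (m:ℝ) * Real.log (p * t / m) := by rw [e]
      _ ≤ (m:ℝ) * (p * t / m - 1) := by
          exact mul_le_mul_of_nonneg_left key (le_of_lt hm)
      _ = p * t - m := by field_simp

private lemma gibbs (T k : ℕ) (hT : 1 ≤ T) (hk : k ≤ T) (q : ℝ) (hq : q ∈ Set.Ioo (0:ℝ) 1) :
    (-(k:ℝ) * Real.log ((k:ℝ) / T) - ((T:ℝ) - k) * Real.log (((T:ℝ) - k) / T))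
      ≤ -((k:ℝ) * Real.log q + ((T:ℝ) - k) * Real.log (1 - q)) := by
  have hTR : (0:ℝ) < (T:ℝ) := by exact_mod_cast hT
  have hcast : ((T:ℝ) - k) = ((T - k : ℕ) : ℝ) := by
    push_cast [Nat.cast_sub hk]; ring
  have h1 := gibbs_aux k (T:ℝ) q hTR hq.1
  have h2 := gibbs_aux (T - k) (T:ℝ) (1 - q) hTR (by linarith [hq.2])
  rw [← hcast] at h2
  nlinarith [h1, h2]

theorem stmt_15 :
    ∃ C : ℝ, ∀ T : ℕ, 1 ≤ T → ∀ y : ℕ → Bool,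
      (-∑ t ∈ Finset.Icc 1 T,
          Real.log
            ((((Finset.Icc 1 (t - 1)).filter (fun s => y s = y t)).card + 1 / 2 : ℝ) / t)) -
        sInf {v : ℝ | ∃ q ∈ Set.Ioo (0 : ℝ) 1,
          v = -∑ t ∈ Finset.Icc 1 T, Real.log (if y t then q else 1 - q)} ≤
      (1 / 2 : ℝ) * Real.log T + C := by
  obtain ⟨C, hC⟩ := kt_main_ineq
  refine ⟨C, fun T hT y => ?_⟩
  set k := ((Finset.Icc 1 T).filter (fun s => y s = true)).card with hkdef
  have hTR : (0:ℝ) < (T:ℝ) := by exact_mod_cast hT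
  have hcardT : (Finset.Icc 1 T).card = T := by rw [Nat.card_Icc]; omega
  have hkT : k ≤ T := by
    rw [← hcardT]; exact Finset.card_filter_le _ _
  have hfalse : ((Finset.Icc 1 T).filter (fun s => y s = false)).card = T - k := by
    have := Finset.card_filter_add_card_filter_not
      (s := Finset.Icc 1 T) (p := fun s => y s = true)
    simp only [hcardT] at this
    have heq : (Finset.Icc 1 T).filter (fun s => ¬ (y s = true))
        = (Finset.Icc 1 T).filter (fun s => y s = false) := by
      apply Finset.filter_congr; intro x _; simp [Bool.not_eq_true]
    rw [heq] at this
    omega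
  -- rewrite the KT loss
  have hloss : (-∑ t ∈ Finset.Icc 1 T,
        Real.log ((((Finset.Icc 1 (t - 1)).filter (fun s => y s = y t)).card + 1 / 2 : ℝ) / t))
      = Real.log (Nat.factorial T : ℝ) - ktA k - ktA (T - k) := by
    have hsplit : ∀ t ∈ Finset.Icc 1 T,
        Real.log ((((Finset.Icc 1 (t - 1)).filter (fun s => y s = y t)).card + 1 / 2 : ℝ) / t)
        = Real.log ((((Finset.Icc 1 (t - 1)).filter (fun s => y s = y t)).card : ℝ) + 1 / 2)
          - Real.log (t : ℝ) := by
      intro t ht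
      have ht1 : 1 ≤ t := (Finset.mem_Icc.1 ht).1
      have : (0:ℝ) < (t:ℝ) := by exact_mod_cast ht1
      rw [Real.log_div (by positivity) (ne_of_gt this)]
    rw [Finset.sum_congr rfl hsplit, Finset.sum_sub_distrib]
    have hlogfact : ∑ t ∈ Finset.Icc 1 T, Real.log (t:ℝ) = Real.log (Nat.factorial T : ℝ) := by
      rw [← Real.log_prod (fun t ht => by
        have ht1 : 1 ≤ t := (Finset.mem_Icc.1 ht).1
        have : (0:ℝ) < (t:ℝ) := by exact_mod_cast ht1
        exact ne_of_gt this)]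
      congr 1
      rw [← Nat.cast_prod]
      congr 1
      rw [← Finset.Ico_add_one_right_eq_Icc]
      exact Finset.prod_Ico_id_eq_factorial T
    rw [kt_telescope, hlogfact, ← hkdef, hfalse]
    ring
  rw [hloss]
  -- lower bound the sInf
  set H : ℝ := (-(k:ℝ) * Real.log ((k:ℝ) / T) - ((T:ℝ) - k) * Real.log (((T:ℝ) - k) / T))
    with hHdef
  have hsInf : H ≤ sInf {v : ℝ | ∃ q ∈ Set.Ioo (0 : ℝ) 1,
      v = -∑ t ∈ Finset.Icc 1 T, Real.log (if y t then q else 1 - q)} := by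
    apply le_csInf
    · exact ⟨_, ⟨1/2, ⟨by norm_num, by norm_num⟩, rfl⟩⟩
    · rintro v ⟨q, hq, rfl⟩
      have hsum : ∑ t ∈ Finset.Icc 1 T, Real.log (if y t then q else 1 - q)
          = (k:ℝ) * Real.log q + ((T:ℝ) - k) * Real.log (1 - q) := by
        rw [← Finset.sum_filter_add_sum_filter_not (Finset.Icc 1 T) (fun t => y t = true)]
        have e1 : ∑ t ∈ (Finset.Icc 1 T).filter (fun t => y t = true),
            Real.log (if y t then q else 1 - q) = (k:ℝ) * Real.log q := by
          have h1 : ∀ t ∈ (Finset.Icc 1 T).filter (fun t => y t = true),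
              Real.log (if y t then q else 1 - q) = Real.log q := by
            intro t ht
            have := (Finset.mem_filter.1 ht).2
            simp [this]
          rw [Finset.sum_congr rfl h1, Finset.sum_const, hkdef, nsmul_eq_mul]
        have e2 : ∑ t ∈ (Finset.Icc 1 T).filter (fun t => ¬ (y t = true)),
            Real.log (if y t then q else 1 - q) = ((T:ℝ) - k) * Real.log (1 - q) := by
          have h1 : ∀ t ∈ (Finset.Icc 1 T).filter (fun t => ¬ (y t = true)),
              Real.log (if y t then q else 1 - q) = Real.log (1 - q) := by
            intro t ht
            have h2 := (Finset.mem_filter.1 ht).2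
            simp only [Bool.not_eq_true] at h2
            simp [h2]
          rw [Finset.sum_congr rfl h1, Finset.sum_const, nsmul_eq_mul]
          have heq : (Finset.Icc 1 T).filter (fun s => ¬ (y s = true))
              = (Finset.Icc 1 T).filter (fun s => y s = false) := by
            apply Finset.filter_congr; intro x _; simp [Bool.not_eq_true]
          rw [heq, hfalse]
          congr 1
          push_cast [Nat.cast_sub hkT]
          ring
        rw [e1, e2]
      rw [hsum]
      exact gibbs T k hT hkT q hq
  have hmain := hC T k hT hkT
  rw [← hHdef] at hmain
  have hfin : Real.log (Nat.factorial T : ℝ) - ktA k - ktA (T - k) - H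
      ≤ (1 / 2 : ℝ) * Real.log T + C := by linarith
  exact le_trans (by linarith [hsInf]) hfin
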